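/- arXiv:1506.01068 — 2 statements merged into one kernel-verified Lean document; each statement's English description precedes it below -/
import Mathlib

section
/- If f = Σ*_{η<λ} (−1)^η f_η is the alternating sum of a decreasing transfinite sequence of non-negative bounded functions (f_η)_{η<λ} with λ even, then 0 ≤ f ≤ f₀ pointwise. -/
open Set Filter Topology

noncomputable section

/-- Oscillation of `f` at `x` restricted to `F`. -/
def osc {X : Type*} [TopologicalSpace X] (f : X → ℝ) (x : X) (F : Set X) : ENNReal :=
  ⨅ (U : Set X) (_ : IsOpen U) (_ : x ∈ U),
    ⨆ (y) (_ : y ∈ U ∩ F) (z) (_ : z ∈ U ∩ F), ENNReal.ofReal |f y - f z|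

/-- Oscillation derivative. -/
def oscDeriv {X : Type*} [TopologicalSpace X] (f : X → ℝ) (ε : ℝ) (F : Set X) : Set X :=
  {x ∈ F | ENNReal.ofReal ε ≤ osc f x F}

/-- Iterated derivatives of a set operation. -/
def iterD {X : Type*} (D : Set X → Set X) (F : Set X) (o : Ordinal.{0}) : Set X :=
  Ordinal.limitRecOn o F (fun _ ih => D ih) (fun o _ ih => ⋂ (η : Ordinal.{0}) (h : η < o), ih η h)

open Classical in
/-- Rank of a derivative: least `θ` with `D^θ(X) = ∅`, or `ω₁` if there is none. -/
def rkD {X : Type*} (D : Set X → Set X) : Ordinal.{0} :=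
  if ∃ θ, iterD D Set.univ θ = ∅ then sInf {θ | iterD D Set.univ θ = ∅}
  else (Cardinal.aleph 1).ord

/-- Oscillation rank. -/
def betaRank {X : Type*} [TopologicalSpace X] (f : X → ℝ) : Ordinal.{0} :=
  ⨆ ε : {ε : ℝ // 0 < ε}, rkD (oscDeriv f ε.1)

/-- Oscillation of a sequence of functions. -/
def oscSeq {X : Type*} [TopologicalSpace X] (f : ℕ → X → ℝ) (x : X) (F : Set X) : ENNReal :=
  ⨅ (U : Set X) (_ : IsOpen U) (_ : x ∈ U) (N : ℕ),
    ⨆ (m) (_ : N ≤ m) (n) (_ : N ≤ n) (y) (_ : y ∈ U ∩ F), ENNReal.ofReal |f m y - f n y|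

def oscSeqDeriv {X : Type*} [TopologicalSpace X] (f : ℕ → X → ℝ) (ε : ℝ) (F : Set X) : Set X :=
  {x ∈ F | ENNReal.ofReal ε ≤ oscSeq f x F}

/-- Convergence rank of a sequence. -/
def gammaRank {X : Type*} [TopologicalSpace X] (f : ℕ → X → ℝ) : Ordinal.{0} :=
  ⨆ ε : {ε : ℝ // 0 < ε}, rkD (oscSeqDeriv f ε.1)

/-- Alternating transfinite sum `Σ*_{η<θ} (−1)^η f_η`. -/
def altSum {X : Type*} (f : Ordinal.{0} → X → ℝ) (θ : Ordinal.{0}) : X → ℝ :=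
  Ordinal.limitRecOn θ (fun _ => 0)
    (fun η ih x => ih x + (if η % 2 = 0 then f η x else - f η x))
    (fun θ _ ih x => sSup {y | ∃ ζ, ∃ h : ζ < θ, ζ % 2 = 0 ∧ ih ζ h x = y})

/-- The `ξ`-th additive Borel class. -/
def Sigma0 {X : Type*} [TopologicalSpace X] (ξ : Ordinal.{0}) : Set (Set X) :=
  {s | IsOpen s} ∪
  {s | ∃ g : ℕ → Set X,
        (∀ n, ∃ η, ∃ _ : η < ξ, 1 ≤ η ∧ (g n)ᶜ ∈ Sigma0 η) ∧ s = ⋃ n, g n}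
termination_by ξ

/-- Baire class `ξ` functions. -/
def BaireClass {X : Type*} [TopologicalSpace X] (ξ : Ordinal.{0}) (f : X → ℝ) : Prop :=
  (ξ = 0 ∧ Continuous f) ∨
  (1 ≤ ξ ∧ ∃ g : ℕ → X → ℝ,
      (∀ n, ∃ η, ∃ _ : η < ξ, BaireClass η (g n)) ∧
      ∀ x, Tendsto (fun n => g n x) atTop (𝓝 (f x)))
termination_by ξ



section Aux

open Ordinal Order

lemma mod2_cases (a : Ordinal.{0}) : a % 2 = 0 ∨ a % 2 = 1 := by
  have h := Ordinal.mod_lt a (b := 2) (by norm_num)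
  have : a % 2 ≤ 1 := by
    rwa [← Order.lt_succ_iff, show Order.succ (1:Ordinal) = 2 by
      rw [← Ordinal.add_one_eq_succ]; norm_num]
  exact Ordinal.le_one_iff.1 this

lemma succ_mod2 (a : Ordinal.{0}) : (a + 1) % 2 = (a % 2 + 1) % 2 := by
  conv_lhs => rw [← Ordinal.div_add_mod a 2, add_assoc, Ordinal.mul_add_mod_self]

lemma succ_mod2_of_even {a : Ordinal.{0}} (h : a % 2 = 0) : (a + 1) % 2 = 1 := by
  rw [succ_mod2, h, zero_add, Ordinal.mod_eq_of_lt (by norm_num)]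

lemma succ_mod2_of_odd {a : Ordinal.{0}} (h : a % 2 = 1) : (a + 1) % 2 = 0 := by
  rw [succ_mod2, h, show (1:Ordinal) + 1 = 2 by norm_num, Ordinal.mod_self]

lemma limit_mod2 {a : Ordinal.{0}} (h : Order.IsSuccLimit a) : a % 2 = 0 := by
  apply Ordinal.mod_eq_zero_of_dvd
  have := Ordinal.mul_omega0_dvd (a := 2) (by norm_num) (Ordinal.nat_lt_omega0 2)
    (Ordinal.isSuccLimit_iff_omega0_dvd.1 h).2
  exact ⟨a, this.symm⟩

lemma altSum_zero {X : Type*} (f : Ordinal.{0} → X → ℝ) : altSum f 0 = fun _ => 0 := by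
  rw [altSum, Ordinal.limitRecOn_zero]

lemma altSum_succ {X : Type*} (f : Ordinal.{0} → X → ℝ) (η : Ordinal.{0}) :
    altSum f (η + 1) = fun x =>
      altSum f η x + (if η % 2 = 0 then f η x else - f η x) := by
  rw [altSum, Ordinal.add_one_eq_succ, Ordinal.limitRecOn_succ]
  rfl

lemma altSum_limit {X : Type*} (f : Ordinal.{0} → X → ℝ) {θ : Ordinal.{0}}
    (h : Order.IsSuccLimit θ) : altSum f θ = fun x =>
      sSup {y | ∃ ζ, ζ < θ ∧ ζ % 2 = 0 ∧ altSum f ζ x = y} := by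
  rw [altSum, Ordinal.limitRecOn_limit _ _ _ _ h]
  simp only [altSum, exists_prop]

lemma altSum_main {X : Type*} (lam : Ordinal.{0}) (f : Ordinal.{0} → X → ℝ)
    (hmono : ∀ η ζ : Ordinal.{0}, η ≤ ζ → ζ ≤ lam → ∀ x, f ζ x ≤ f η x)
    (hnn : ∀ η : Ordinal.{0}, η ≤ lam → ∀ x, 0 ≤ f η x) (x : X) :
    ∀ θ : Ordinal.{0}, θ ≤ lam → θ % 2 = 0 →
      0 ≤ altSum f θ x ∧ altSum f θ x + f θ x ≤ f 0 x := by
  intro θ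
  induction θ using Ordinal.induction with
  | h θ IH =>
    intro hθlam hθ2
    rcases Ordinal.zero_or_succ_or_isSuccLimit θ with rfl | ⟨η, rfl⟩ | hlim
    · rw [altSum_zero]; simp
    · -- θ = η + 1, even, so η is odd, hence η = ζ + 1 with ζ even
      rw [← Ordinal.add_one_eq_succ] at *
      have hη : η % 2 = 1 := by
        rcases mod2_cases η with h | h
        · rw [succ_mod2_of_even h] at hθ2; norm_num at hθ2
        · exact h
      rcases Ordinal.zero_or_succ_or_isSuccLimit η with rfl | ⟨ζ, rfl⟩ | hlim'
      · simp [Ordinal.zero_mod] at hη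
      · rw [← Ordinal.add_one_eq_succ] at *
        have hζ : ζ % 2 = 0 := by
          rcases mod2_cases ζ with h | h
          · exact h
          · rw [succ_mod2_of_odd h] at hη; norm_num at hη
        have hζlam : ζ ≤ lam := le_trans (le_trans (le_self_add (a := ζ) (b := 1))
          (le_self_add (a := ζ + 1) (b := 1))) hθlam
        have hζ1lam : ζ + 1 ≤ lam := le_trans (le_self_add (a := ζ + 1) (b := 1)) hθlam
        obtain ⟨h0, h1⟩ := IH ζ (by
          calc ζ < ζ + 1 := lt_add_one_iff.2 le_rfl
          _ < ζ + 1 + 1 := lt_add_one_iff.2 le_rfl) hζlam hζ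
        rw [altSum_succ, altSum_succ]
        simp only [hζ, hη]
        rw [if_pos trivial, if_neg (by norm_num : ¬ (1:Ordinal.{0}) = 0)]
        have e1 : f (ζ + 1) x ≤ f ζ x := hmono ζ (ζ + 1) (le_self_add (a := ζ) (b := 1)) hζ1lam x
        have e2 : f (ζ + 1 + 1) x ≤ f (ζ + 1) x :=
          hmono (ζ + 1) (ζ + 1 + 1) (le_self_add (a := ζ+1) (b := 1)) hθlam x
        constructor
        · linarith
        · linarith
      · rw [limit_mod2 hlim'] at hη; exact absurd hη (by norm_num)
    · -- limit case
      rw [altSum_limit f hlim]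
      set S := {y | ∃ ζ, ζ < θ ∧ ζ % 2 = 0 ∧ altSum f ζ x = y} with hS
      have h0S : (0:ℝ) ∈ S := ⟨0, hlim.pos, Ordinal.zero_mod 2, by rw [altSum_zero]⟩
      have hbdd : ∀ y ∈ S, y ≤ f 0 x - f θ x := by
        rintro y ⟨ζ, hζθ, hζ2, rfl⟩
        have hζlam : ζ ≤ lam := le_trans hζθ.le hθlam
        have := (IH ζ hζθ hζlam hζ2).2
        have hm : f θ x ≤ f ζ x := hmono ζ θ hζθ.le hθlam x
        linarith
      have hbddA : BddAbove S := ⟨f 0 x - f θ x, hbdd⟩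
      constructor
      · exact le_csSup hbddA h0S
      · have := csSup_le ⟨0, h0S⟩ hbdd
        linarith

end Aux

theorem stmt10 {X : Type*} (lam : Ordinal.{0}) (f : Ordinal.{0} → X → ℝ)
    (hmono : ∀ η ζ : Ordinal.{0}, η ≤ ζ → ζ ≤ lam → ∀ x, f ζ x ≤ f η x)
    (hnn : ∀ η : Ordinal.{0}, η ≤ lam → ∀ x, 0 ≤ f η x)
    (hbd : ∀ η : Ordinal.{0}, η ≤ lam → ∃ M, ∀ x, |f η x| ≤ M)
    (hlam : lam % 2 = 0) (x : X) :
    0 ≤ altSum f lam x ∧ altSum f lam x ≤ f 0 x := by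
  obtain ⟨h0, h1⟩ := altSum_main lam f hmono hnn x lam le_rfl hlam
  exact ⟨h0, by have := hnn lam le_rfl x; linarith⟩

end
end

section
/- If a sequence (f_n) of functions on a Polish space converges pointwise to a bounded function f, each f_n satisfies β(f_n) ≤ ω^λ, and the convergence is pseudouniform (i.e., γ((f_n)) ≤ ω), then β(f) ≤ ω^{λ+1}. -/
open Set Filter Topology

noncomputable section

section Aux

open Ordinal

variable {X : Type*}

theorem iterD_zero (D : Set X → Set X) (F : Set X) : iterD D F 0 = F :=
  Ordinal.limitRecOn_zero _ _ _

theorem iterD_succ (D : Set X → Set X) (F : Set X) (o : Ordinal) :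
    iterD D F (o + 1) = D (iterD D F o) := by
  rw [iterD, Ordinal.add_one_eq_succ, Ordinal.limitRecOn_succ]
  rfl

theorem iterD_limit (D : Set X → Set X) (F : Set X) {o : Ordinal} (h : Order.IsSuccLimit o) :
    iterD D F o = ⋂ (η : Ordinal) (_ : η < o), iterD D F η := by
  rw [iterD, Ordinal.limitRecOn_limit _ _ _ _ h]
  rfl

end Aux
section Aux2

open Ordinal

variable {X : Type*} {D : Set X → Set X}

theorem iterD_subset (hD : ∀ F, D F ⊆ F) (F : Set X) (o : Ordinal) :
    iterD D F o ⊆ F := by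
  induction o using Ordinal.limitRecOn with
  | zero => rw [iterD_zero]
  | add_one o ih =>
    rw [iterD_succ]
    exact (hD _).trans ih
  | limit o ho ih =>
    rw [iterD_limit D F ho]
    intro x hx
    have h0 : (0 : Ordinal) < o := ho.pos
    have := Set.mem_iInter₂.1 hx 0 h0
    rw [iterD_zero] at this
    exact this

theorem iterD_antitone (hD : ∀ F, D F ⊆ F) (F : Set X) :
    ∀ {a b : Ordinal}, a ≤ b → iterD D F b ⊆ iterD D F a := by
  intro a b
  induction b using Ordinal.limitRecOn with
  | zero => intro h; rw [nonpos_iff_eq_zero.1 h]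
  | add_one b ih =>
    intro h
    rcases (Order.le_succ_iff_eq_or_le.1 h) with h | h
    · rw [h, ← Ordinal.add_one_eq_succ]
    · rw [iterD_succ]
      exact (hD _).trans (ih h)
  | limit b hb ih =>
    intro h
    rcases eq_or_lt_of_le h with h | h
    · rw [h]
    · rw [iterD_limit D F hb]
      exact Set.iInter₂_subset a h

theorem iterD_mono (hm : Monotone D) {F G : Set X} (h : F ⊆ G) (o : Ordinal) :
    iterD D F o ⊆ iterD D G o := by
  induction o using Ordinal.limitRecOn with
  | zero => rw [iterD_zero, iterD_zero]; exact h
  | add_one o ih => rw [iterD_succ, iterD_succ]; exact hm ih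
  | limit o ho ih =>
    rw [iterD_limit D F ho, iterD_limit D G ho]
    exact Set.iInter₂_mono fun η hη => ih η hη

theorem iterD_add (hD : ∀ F, D F ⊆ F) (F : Set X) (a : Ordinal) :
    ∀ b : Ordinal, iterD D F (a + b) = iterD D (iterD D F a) b := by
  intro b
  induction b using Ordinal.limitRecOn with
  | zero => rw [add_zero, iterD_zero]
  | add_one b ih =>
    rw [← add_assoc, iterD_succ, iterD_succ, ih]
  | limit b hb ih =>
    have hab : Order.IsSuccLimit (a + b) := Ordinal.isSuccLimit_add a hb
    rw [iterD_limit D F hab, iterD_limit _ _ hb]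
    apply Set.Subset.antisymm
    · intro x hx
      apply Set.mem_iInter₂.2
      intro ζ hζ
      rw [← ih ζ hζ]
      exact Set.mem_iInter₂.1 hx (a + ζ) ((add_lt_add_iff_left a).2 hζ)
    · intro x hx
      apply Set.mem_iInter₂.2
      intro η hη
      rcases le_or_gt η a with h | h
      · have h0 : (0 : Ordinal) < b := hb.pos
        have := Set.mem_iInter₂.1 hx 0 h0
        rw [iterD_zero] at this
        exact iterD_antitone hD F h this
      · have hle : a ≤ η := h.le
        have hηζ : η = a + (η - a) := (Ordinal.add_sub_cancel_of_le hle).symm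
        have hζb : η - a < b := Ordinal.sub_lt_of_lt_add hη hb.pos
        have := Set.mem_iInter₂.1 hx (η - a) hζb
        rw [← ih _ hζb, ← hηζ] at this
        exact this

theorem iterD_fixed (F : Set X) (hF : D F = F) (o : Ordinal) : iterD D F o = F := by
  induction o using Ordinal.limitRecOn with
  | zero => exact iterD_zero D F
  | add_one o ih => rw [iterD_succ, ih, hF]
  | limit o ho ih =>
    rw [iterD_limit D F ho]
    apply Set.Subset.antisymm
    · intro x hx
      have := Set.mem_iInter₂.1 hx 0 ho.pos
      rwa [ih 0 ho.pos] at this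
    · intro x hx
      exact Set.mem_iInter₂.2 fun η hη => (ih η hη).symm ▸ hx

end Aux2
section Aux3

open Ordinal

variable {X : Type*} {D : Set X → Set X}

theorem rkD_le_of_empty {θ : Ordinal} (h : iterD D Set.univ θ = ∅) : rkD D ≤ θ := by
  classical
  rw [rkD, if_pos ⟨θ, h⟩]
  exact csInf_le (OrderBot.bddBelow _) h

theorem iterD_univ_empty_of_rkD_le (hD : ∀ F, D F ⊆ F) {c : Ordinal}
    (hlt : c < (Cardinal.aleph 1).ord) (h : rkD D ≤ c) : iterD D Set.univ c = ∅ := by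
  classical
  rw [rkD] at h
  split_ifs at h with hex
  · have hne : {θ | iterD D Set.univ θ = ∅}.Nonempty := hex
    have hmem := csInf_mem hne
    exact Set.subset_empty_iff.1 (hmem ▸ iterD_antitone hD _ h)
  · exact absurd (h.trans_lt hlt) (lt_irrefl _)

end Aux3
section Aux4

open Ordinal

variable {X : Type*} [TopologicalSpace X]

theorem oscDeriv_subset (f : X → ℝ) (ε : ℝ) (F : Set X) : oscDeriv f ε F ⊆ F :=
  fun _ hx => hx.1

theorem oscSeqDeriv_subset (f : ℕ → X → ℝ) (ε : ℝ) (F : Set X) : oscSeqDeriv f ε F ⊆ F :=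
  fun _ hx => hx.1

theorem osc_mono (f : X → ℝ) (x : X) {F G : Set X} (h : F ⊆ G) : osc f x F ≤ osc f x G := by
  rw [osc, osc]
  apply iInf_mono fun U => iInf_mono fun hU => iInf_mono fun hx => ?_
  apply iSup₂_le fun y hy => iSup₂_le fun z hz => ?_
  exact le_iSup₂_of_le y ⟨hy.1, h hy.2⟩ (le_iSup₂_of_le z ⟨hz.1, h hz.2⟩ le_rfl)

theorem oscDeriv_mono (f : X → ℝ) (ε : ℝ) : Monotone (oscDeriv f ε) := by
  intro F G h x hx
  exact ⟨h hx.1, hx.2.trans (osc_mono f x h)⟩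

theorem isClosed_osc_ge (f : X → ℝ) (F : Set X) (c : ENNReal) :
    IsClosed {x | c ≤ osc f x F} := by
  rw [← isOpen_compl_iff]
  rw [isOpen_iff_forall_mem_open]
  intro x hx
  simp only [Set.mem_compl_iff, Set.mem_setOf_eq, not_le] at hx
  rw [osc] at hx
  obtain ⟨U, hU1⟩ := iInf_lt_iff.1 hx
  obtain ⟨hUopen, hU2⟩ := iInf_lt_iff.1 hU1
  obtain ⟨hxU, hU⟩ := iInf_lt_iff.1 hU2
  refine ⟨U, fun x' hx' => ?_, hUopen, hxU⟩
  simp only [Set.mem_compl_iff, Set.mem_setOf_eq, not_le]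
  refine lt_of_le_of_lt ?_ hU
  exact iInf_le_of_le U (iInf_le_of_le hUopen (iInf_le _ hx'))

theorem isClosed_iterD_oscDeriv (f : X → ℝ) (ε : ℝ) {F : Set X} (hF : IsClosed F)
    (o : Ordinal) : IsClosed (iterD (oscDeriv f ε) F o) := by
  induction o using Ordinal.limitRecOn with
  | zero => rwa [iterD_zero]
  | add_one o ih =>
    rw [iterD_succ]
    have : oscDeriv f ε (iterD (oscDeriv f ε) F o) =
        iterD (oscDeriv f ε) F o ∩ {x | ENNReal.ofReal ε ≤ osc f x (iterD (oscDeriv f ε) F o)} := by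
      ext x; exact Iff.rfl
    rw [this]
    exact ih.inter (isClosed_osc_ge f _ _)
  | limit o ho ih =>
    rw [iterD_limit _ F ho]
    exact isClosed_iInter fun η => isClosed_iInter fun hη => ih η hη

end Aux4
section Aux5

open Ordinal

variable {X : Type*} [TopologicalSpace X]

theorem rkD_oscDeriv_le_omega1 [SecondCountableTopology X]
    (f : X → ℝ) (ε : ℝ) : rkD (oscDeriv f ε) ≤ (Cardinal.aleph 1).ord := by
  classical
  set D := oscDeriv f ε with hDdef
  have hD : ∀ F, D F ⊆ F := oscDeriv_subset f ε
  by_cases hex : ∃ θ, iterD D Set.univ θ = ∅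
  · rw [rkD, if_pos hex]
    set θs := sInf {θ | iterD D Set.univ θ = ∅} with hθsdef
    have hmem : iterD D Set.univ θs = ∅ := csInf_mem hex
    have hlt : ∀ θ < θs, iterD D Set.univ θ ≠ ∅ := fun θ hθ h =>
      (not_le.2 hθ) (csInf_le (OrderBot.bddBelow _) h)
    have hstrict : ∀ θ : {θ : Ordinal.{0} // θ < θs},
        ∃ U ∈ TopologicalSpace.countableBasis X,
          (∃ x ∈ iterD D Set.univ θ.1, x ∈ U) ∧
            U ∩ iterD D Set.univ (θ.1 + 1) = ∅ := by
      rintro ⟨θ, hθ⟩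
      -- there is a point removed at stage θ+1
      have hne : ∃ x, x ∈ iterD D Set.univ θ ∧ x ∉ iterD D Set.univ (θ + 1) := by
        by_contra hcon
        push_neg at hcon
        have heq : D (iterD D Set.univ θ) = iterD D Set.univ θ :=
          subset_antisymm (hD _) fun x hx => by
            have := hcon x hx; rwa [iterD_succ] at this
        have hfix := iterD_fixed (D := D) _ heq (θs - θ)
        rw [← iterD_add hD _ θ (θs - θ), Ordinal.add_sub_cancel_of_le hθ.le] at hfix
        exact hlt θ hθ (by rw [← hfix, hmem])
      obtain ⟨x, hx1, hx2⟩ := hne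
      have hclosed : IsClosed (iterD D Set.univ (θ + 1)) :=
        isClosed_iterD_oscDeriv f ε isClosed_univ _
      obtain ⟨U, hUb, hxU, hUsub⟩ :=
        (TopologicalSpace.isBasis_countableBasis X).exists_subset_of_mem_open hx2
          hclosed.isOpen_compl
      exact ⟨U, hUb, ⟨x, hx1, hxU⟩, Set.eq_empty_of_forall_notMem
        fun y hy => (hUsub hy.1) hy.2⟩
    choose U hUb hUx hUd using hstrict
    have hinj : Function.Injective fun θ => (⟨U θ, hUb θ⟩ :
        ↥(TopologicalSpace.countableBasis X)) := by
      intro θ₁ θ₂ hU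
      have hUeq : U θ₁ = U θ₂ := congrArg Subtype.val hU
      by_contra hne
      have hne' : θ₁.1 ≠ θ₂.1 := fun h => hne (Subtype.ext h)
      rcases hne'.lt_or_gt with h | h
      · obtain ⟨y, hy1, hy2⟩ := hUx θ₂
        have : y ∈ iterD D Set.univ (θ₁.1 + 1) :=
          iterD_antitone hD _ (Order.add_one_le_of_lt h) hy1
        exact (Set.eq_empty_iff_forall_notMem.1 (hUd θ₁) y)
          ⟨by rw [hUeq]; exact hy2, this⟩
      · obtain ⟨y, hy1, hy2⟩ := hUx θ₁
        have : y ∈ iterD D Set.univ (θ₂.1 + 1) :=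
          iterD_antitone hD _ (Order.add_one_le_of_lt h) hy1
        exact (Set.eq_empty_iff_forall_notMem.1 (hUd θ₂) y)
          ⟨by rw [← hUeq]; exact hy2, this⟩
    have : Countable ↥(TopologicalSpace.countableBasis X) :=
      (TopologicalSpace.countable_countableBasis X).to_subtype
    have hcnt : Countable {θ : Ordinal.{0} // θ < θs} := hinj.countable
    have hcnt2 : Countable ↥(Set.Iio θs) := hcnt
    have hcard : Cardinal.lift.{1} θs.card ≤ Cardinal.aleph0 := by
      rw [← Ordinal.mk_Iio_ordinal]
      exact Cardinal.mk_le_aleph0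
    have hcard' : θs.card < Cardinal.aleph 1 := by
      have : θs.card ≤ Cardinal.aleph0 := by
        rwa [← Cardinal.lift_le.{1}, Cardinal.lift_aleph0]
      exact this.trans_lt Cardinal.aleph0_lt_aleph_one
    exact (Cardinal.lt_ord.2 hcard').le
  · rw [rkD, if_neg hex]

end Aux5
section Aux6

open Ordinal

variable {X : Type*} [TopologicalSpace X]

theorem iterD_localize (f g : X → ℝ) {ε ε' : ℝ} (hε' : 0 < ε')
    (hsub : ε' ≤ ε - 2 * ε') {A G U : Set X} (hAG : A ⊆ G) (hU : IsOpen U)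
    (happ : ∀ y ∈ U ∩ G, |f y - g y| ≤ ε') (θ : Ordinal) :
    iterD (oscDeriv f ε) A θ ∩ U ⊆ iterD (oscDeriv g ε') A θ := by
  induction θ using Ordinal.limitRecOn with
  | zero => rw [iterD_zero, iterD_zero]; exact Set.inter_subset_left
  | add_one θ ih =>
    rw [iterD_succ, iterD_succ]
    rintro x ⟨⟨hxA, hxosc⟩, hxU⟩
    set Aθ := iterD (oscDeriv f ε) A θ with hAθ
    set Bθ := iterD (oscDeriv g ε') A θ with hBθ
    refine ⟨ih ⟨hxA, hxU⟩, ?_⟩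
    rw [osc]
    refine le_iInf fun V => le_iInf fun hV => le_iInf fun hxV => ?_
    have h1 : ENNReal.ofReal ε ≤
        ⨆ (y) (_ : y ∈ (V ∩ U) ∩ Aθ) (z) (_ : z ∈ (V ∩ U) ∩ Aθ),
          ENNReal.ofReal |f y - f z| := by
      refine hxosc.trans ?_
      rw [osc]
      exact iInf_le_of_le (V ∩ U) (iInf_le_of_le (hV.inter hU) (iInf_le _ ⟨hxV, hxU⟩))
    have h2 : (⨆ (y) (_ : y ∈ (V ∩ U) ∩ Aθ) (z) (_ : z ∈ (V ∩ U) ∩ Aθ),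
          ENNReal.ofReal |f y - f z|)
        ≤ (⨆ (y) (_ : y ∈ V ∩ Bθ) (z) (_ : z ∈ V ∩ Bθ), ENNReal.ofReal |g y - g z|)
          + ENNReal.ofReal (2 * ε') := by
      refine iSup₂_le fun y hy => iSup₂_le fun z hz => ?_
      have hyB : y ∈ V ∩ Bθ := ⟨hy.1.1, ih ⟨hy.2, hy.1.2⟩⟩
      have hzB : z ∈ V ∩ Bθ := ⟨hz.1.1, ih ⟨hz.2, hz.1.2⟩⟩
      have hyG : y ∈ U ∩ G := ⟨hy.1.2, hAG (iterD_subset (oscDeriv_subset f ε) A θ hy.2)⟩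
      have hzG : z ∈ U ∩ G := ⟨hz.1.2, hAG (iterD_subset (oscDeriv_subset f ε) A θ hz.2)⟩
      have hy' := happ y hyG
      have hz' := happ z hzG
      have hfg : |f y - f z| ≤ |g y - g z| + 2 * ε' := by
        have t1 : |f y - f z| ≤ |f y - g y| + |g y - f z| := abs_sub_le _ _ _
        have t2 : |g y - f z| ≤ |g y - g z| + |g z - f z| := abs_sub_le _ _ _
        have t3 : |g z - f z| = |f z - g z| := abs_sub_comm _ _
        linarith
      calc ENNReal.ofReal |f y - f z| ≤ ENNReal.ofReal (|g y - g z| + 2 * ε') :=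
            ENNReal.ofReal_le_ofReal hfg
        _ = ENNReal.ofReal |g y - g z| + ENNReal.ofReal (2 * ε') :=
            ENNReal.ofReal_add (abs_nonneg _) (by positivity)
        _ ≤ _ := by
            refine add_le_add ?_ le_rfl
            exact le_iSup_of_le y (le_iSup_of_le hyB (le_iSup_of_le z (le_iSup_of_le hzB le_rfl)))
    have h4 : ENNReal.ofReal ε - ENNReal.ofReal (2 * ε') ≤
        ⨆ (y) (_ : y ∈ V ∩ Bθ) (z) (_ : z ∈ V ∩ Bθ), ENNReal.ofReal |g y - g z| :=
      tsub_le_iff_right.2 (h1.trans h2)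
    calc ENNReal.ofReal ε' ≤ ENNReal.ofReal (ε - 2 * ε') := ENNReal.ofReal_le_ofReal hsub
      _ = ENNReal.ofReal ε - ENNReal.ofReal (2 * ε') := ENNReal.ofReal_sub _ (by positivity)
      _ ≤ _ := h4
  | limit θ hθ ih =>
    rw [iterD_limit _ _ hθ, iterD_limit _ _ hθ]
    rintro x ⟨hx1, hx2⟩
    exact Set.mem_iInter₂.2 fun η hη => ih η hη ⟨Set.mem_iInter₂.1 hx1 η hη, hx2⟩

end Aux6
theorem stmt14 {X : Type*} [TopologicalSpace X] [PolishSpace X]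
    (fseq : ℕ → X → ℝ) (f : X → ℝ)
    (hconv : ∀ x, Tendsto (fun n => fseq n x) atTop (𝓝 (f x)))
    (hbd : ∃ M, ∀ x, |f x| ≤ M)
    (lam : Ordinal.{0})
    (hβ : ∀ n, betaRank (fseq n) ≤ Ordinal.omega0 ^ lam)
    (hγ : gammaRank fseq ≤ Ordinal.omega0) :
    betaRank f ≤ Ordinal.omega0 ^ (lam + 1) := by
  have hne : Nonempty {ε : ℝ // 0 < ε} := ⟨⟨1, one_pos⟩⟩
  have hγ' : (⨆ ε : {ε : ℝ // 0 < ε}, rkD (oscSeqDeriv fseq ε.1)) ≤ Ordinal.omega0 := hγ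
  have hβ' : ∀ n, (⨆ ε : {ε : ℝ // 0 < ε}, rkD (oscDeriv (fseq n) ε.1))
      ≤ Ordinal.omega0 ^ lam := hβ
  show (⨆ ε : {ε : ℝ // 0 < ε}, rkD (oscDeriv f ε.1)) ≤ Ordinal.omega0 ^ (lam + 1)
  rcases lt_or_ge (Ordinal.omega0 ^ lam) ((Cardinal.aleph 1).ord) with hcase | hcase
  · -- main case : ω^λ < ω₁
    refine ciSup_le fun εp => ?_
    obtain ⟨ε, hε⟩ := εp
    set ε' := ε / 3 with hε'def
    have hε' : 0 < ε' := by positivity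
    have hsub : ε' ≤ ε - 2 * ε' := by rw [hε'def]; linarith
    set Df := oscDeriv f ε with hDf
    set Dseq := oscSeqDeriv fseq ε' with hDseqdef
    have hDfsub : ∀ F : Set X, Df F ⊆ F := oscDeriv_subset f ε
    have hDseqsub : ∀ F : Set X, Dseq F ⊆ F := oscSeqDeriv_subset fseq ε'
    have homega1 : Ordinal.omega0 < (Cardinal.aleph 1).ord := by
      rw [Cardinal.lt_ord, Ordinal.card_omega0]
      exact Cardinal.aleph0_lt_aleph_one
    have hseqrk : rkD Dseq ≤ Ordinal.omega0 :=
      le_trans (le_ciSup (Ordinal.bddAbove_range _) (⟨ε', hε'⟩ : {ε : ℝ // 0 < ε})) hγ'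
    have hseqempty : iterD Dseq Set.univ Ordinal.omega0 = ∅ :=
      iterD_univ_empty_of_rkD_le hDseqsub homega1 hseqrk
    set G : ℕ → Set X := fun k => iterD Dseq Set.univ (k : Ordinal) with hGdef
    have hGinter : ⋂ k, G k = ∅ := by
      rw [← hseqempty, iterD_limit _ _ Ordinal.isSuccLimit_omega0]
      ext x
      constructor
      · intro hx
        refine Set.mem_iInter₂.2 fun η hη => ?_
        obtain ⟨k, rfl⟩ := Ordinal.lt_omega0.1 hη
        exact Set.mem_iInter.1 hx k
      · intro hx
        exact Set.mem_iInter.2 fun k => Set.mem_iInter₂.1 hx k (Ordinal.nat_lt_omega0 k)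
    have hmain : ∀ k : ℕ, iterD Df Set.univ (Ordinal.omega0 ^ lam * k) ⊆ G k := by
      intro k
      induction k with
      | zero =>
        intro x _
        show x ∈ iterD Dseq Set.univ ((0 : ℕ) : Ordinal)
        rw [Nat.cast_zero, iterD_zero]
        trivial
      | succ k ih =>
        set A := iterD Df Set.univ (Ordinal.omega0 ^ lam * k) with hA
        have hstep : iterD Df Set.univ (Ordinal.omega0 ^ lam * ((k + 1 : ℕ) : Ordinal))
            = iterD Df A (Ordinal.omega0 ^ lam) := by
          rw [Nat.cast_add, Nat.cast_one, mul_add, mul_one, iterD_add hDfsub]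
        rw [hstep]
        intro x hx
        have hxA : x ∈ A := iterD_subset hDfsub A _ hx
        have hxG : x ∈ G k := ih hxA
        by_contra hxG1
        have hGsucc : G (k + 1) = Dseq (G k) := by
          show iterD Dseq Set.univ (((k + 1 : ℕ)) : Ordinal) = _
          rw [Nat.cast_add, Nat.cast_one, iterD_succ]
        rw [hGsucc] at hxG1
        have hosc : oscSeq fseq x (G k) < ENNReal.ofReal ε' := by
          by_contra h
          exact hxG1 ⟨hxG, not_lt.1 h⟩
        rw [oscSeq] at hosc
        obtain ⟨U, h1⟩ := iInf_lt_iff.1 hosc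
        obtain ⟨hUopen, h2⟩ := iInf_lt_iff.1 h1
        obtain ⟨hxU, h3⟩ := iInf_lt_iff.1 h2
        obtain ⟨N, h4⟩ := iInf_lt_iff.1 h3
        have happ : ∀ y ∈ U ∩ G k, |f y - fseq N y| ≤ ε' := by
          intro y hy
          have hm : ∀ m, N ≤ m → |fseq m y - fseq N y| < ε' := by
            intro m hm
            have hterm : ENNReal.ofReal |fseq m y - fseq N y| < ENNReal.ofReal ε' := by
              refine lt_of_le_of_lt ?_ h4
              exact le_iSup_of_le m (le_iSup_of_le hm (le_iSup_of_le N (le_iSup_of_le le_rfl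
                (le_iSup_of_le y (le_iSup_of_le hy le_rfl)))))
            exact (ENNReal.ofReal_lt_ofReal_iff hε').1 hterm
          have ht : Tendsto (fun m => |fseq m y - fseq N y|) atTop (𝓝 |f y - fseq N y|) :=
            ((hconv y).sub tendsto_const_nhds).abs
          exact le_of_tendsto ht (eventually_atTop.2 ⟨N, fun m hm' => (hm m hm').le⟩)
        have hloc := iterD_localize f (fseq N) hε' hsub ih hUopen happ (Ordinal.omega0 ^ lam)
        have hNrk : rkD (oscDeriv (fseq N) ε') ≤ Ordinal.omega0 ^ lam :=
          le_trans (le_ciSup (Ordinal.bddAbove_range _) (⟨ε', hε'⟩ : {ε : ℝ // 0 < ε})) (hβ' N)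
        have hNempty : iterD (oscDeriv (fseq N) ε') Set.univ (Ordinal.omega0 ^ lam) = ∅ :=
          iterD_univ_empty_of_rkD_le (oscDeriv_subset _ _) hcase hNrk
        have hmem : x ∈ iterD (oscDeriv (fseq N) ε') Set.univ (Ordinal.omega0 ^ lam) :=
          iterD_mono (oscDeriv_mono _ _) (Set.subset_univ A) _ (hloc ⟨hx, hxU⟩)
        rw [hNempty] at hmem
        exact hmem
    have hempty : iterD Df Set.univ (Ordinal.omega0 ^ (lam + 1)) = ∅ := by
      have hrw : Ordinal.omega0 ^ (lam + 1) = Ordinal.omega0 ^ lam * Ordinal.omega0 := by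
        rw [Ordinal.add_one_eq_succ, Ordinal.opow_succ]
      rw [hrw]
      have hlim : Order.IsSuccLimit (Ordinal.omega0 ^ lam * Ordinal.omega0) :=
        Ordinal.isSuccLimit_mul_right (Ordinal.opow_pos _ Ordinal.omega0_pos) Ordinal.isSuccLimit_omega0
      by_contra h
      obtain ⟨x, hx⟩ := Set.nonempty_iff_ne_empty.2 h
      have hxall : x ∈ ⋂ k, G k := by
        refine Set.mem_iInter.2 fun k => hmain k ?_
        rw [iterD_limit _ _ hlim] at hx
        refine Set.mem_iInter₂.1 hx _ ?_
        exact mul_lt_mul_of_pos_left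
          (Ordinal.nat_lt_omega0 k) (Ordinal.opow_pos _ Ordinal.omega0_pos)
      rw [hGinter] at hxall
      exact hxall
    exact rkD_le_of_empty hempty
  · -- degenerate case : ω₁ ≤ ω^λ
    refine ciSup_le fun εp => ?_
    refine (rkD_oscDeriv_le_omega1 f εp.1).trans (hcase.trans ?_)
    exact Ordinal.opow_le_opow_right Ordinal.omega0_pos (le_self_add (a := lam) (b := 1))

end
end
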